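/- Let p(z) = z^n + a_{n-1}z^{n-1} + … + a_1 z + a_0 be a monic polynomial over ℂ of degree n ≥ 3 whose coefficients satisfy the normalization Σ_{i=0}^{n-1} |a_i| = 1 (equivalently, whose Cauchy bound equals 1). Then τ ≤ 1 and Γ(p) ≤ √9.45 ≈ 3.0741. -/

import Mathlib

open Finset

/-- The `k`-th term in the definition of `τ`: for `k = 3` it is `(|a (n-3)|/2.15)^(1/3)`,
for `k = 4` it is `(|a (n-4)|/2)^(1/4)`, and for `k ≥ 5` it is `|a (n-k)|^(1/k)`. -/
noncomputable def tauTerm (n k : ℕ) (a : ℕ → ℂ) : ℝ :=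
  if k = 3 then (‖a (n - 3)‖ / 2.15) ^ ((1 : ℝ) / 3)
  else if k = 4 then (‖a (n - 4)‖ / 2) ^ ((1 : ℝ) / 4)
  else (‖a (n - k)‖) ^ ((1 : ℝ) / k)

/-- `τ = max{(|a_{n-3}|/2.15)^(1/3), (|a_{n-4}|/2)^(1/4), |a_{n-5}|^(1/5), …, |a_0|^(1/n)}`. -/
noncomputable def tau (n : ℕ) (a : ℕ → ℂ) (hn : 3 ≤ n) : ℝ :=
  (Finset.Icc 3 n).sup' (Finset.nonempty_Icc.mpr hn) (fun k => tauTerm n k a)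

/-- The root bound `Γ(p)`. -/
noncomputable def Gamma (n : ℕ) (a : ℕ → ℂ) (hn : 3 ≤ n) : ℝ :=
  max (Real.sqrt 3.15 *
        Real.sqrt ((tau n a hn) ^ 2 + max (‖a (n - 2)‖) (2 * (tau n a hn) ^ 2)))
      ((‖a (n - 1)‖ +
        Real.sqrt ((‖a (n - 1)‖) ^ 2 +
          4 * ((tau n a hn) ^ 2 + max (‖a (n - 2)‖) (2.15 * (tau n a hn) ^ 2)))) / 2)

/-- If the coefficients satisfy the normalization `Σ_{i<n} |a i| = 1` (Cauchy bound 1),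
then `τ ≤ 1` and `Γ(p) ≤ √9.45`. -/
theorem Gamma_le_of_normalized (n : ℕ) (hn : 3 ≤ n) (a : ℕ → ℂ)
    (hnorm : ∑ i ∈ Finset.range n, ‖a i‖ = 1) :
    tau n a hn ≤ 1 ∧ Gamma n a hn ≤ Real.sqrt 9.45 := by
  have habs : ∀ i, i < n → ‖a i‖ ≤ 1 := by
    intro i hi
    rw [← hnorm]
    exact Finset.single_le_sum (fun j _ => norm_nonneg _) (Finset.mem_range.mpr hi)
  have htau : tau n a hn ≤ 1 := by
    apply Finset.sup'_le
    intro k hk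
    simp only [Finset.mem_Icc] at hk
    have hkn : n - k < n := Nat.sub_lt (by omega) (by omega)
    have h1 : ‖a (n - k)‖ ≤ 1 := habs _ hkn
    have h0 : (0:ℝ) ≤ ‖a (n - k)‖ := norm_nonneg _
    unfold tauTerm
    split_ifs with h3 h4
    · subst h3
      exact Real.rpow_le_one (by positivity) (by rw [div_le_one (by norm_num)]; linarith)
        (by norm_num)
    · subst h4
      exact Real.rpow_le_one (by positivity) (by rw [div_le_one (by norm_num)]; linarith)
        (by norm_num)
    · exact Real.rpow_le_one h0 h1 (by positivity)
  have htau0 : 0 ≤ tau n a hn := by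
    have h3 : (3:ℕ) ∈ Finset.Icc 3 n := Finset.mem_Icc.mpr ⟨le_refl _, hn⟩
    have := Finset.le_sup' (fun k => tauTerm n k a) h3
    have hpos : 0 ≤ tauTerm n 3 a := by
      unfold tauTerm; simp only [if_pos rfl]; positivity
    exact le_trans hpos this
  refine ⟨htau, ?_⟩
  set t := tau n a hn with ht
  have ht2 : t ^ 2 ≤ 1 := by nlinarith
  have ht20 : 0 ≤ t ^ 2 := sq_nonneg t
  have hb : ‖a (n - 2)‖ ≤ 1 := habs _ (by omega)
  have hb0 : (0:ℝ) ≤ ‖a (n - 2)‖ := norm_nonneg _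
  have hc : ‖a (n - 1)‖ ≤ 1 := habs _ (by omega)
  have hc0 : (0:ℝ) ≤ ‖a (n - 1)‖ := norm_nonneg _
  have hs3 : (3:ℝ) ≤ Real.sqrt 9.45 := by
    rw [show (3:ℝ) = Real.sqrt (3^2) from (Real.sqrt_sq (by norm_num)).symm]
    exact Real.sqrt_le_sqrt (by norm_num)
  unfold Gamma
  rw [max_le_iff]
  constructor
  · rw [← Real.sqrt_mul (by norm_num : (0:ℝ) ≤ 3.15)]
    apply Real.sqrt_le_sqrt
    have hmax : max (‖a (n - 2)‖) (2 * t ^ 2) ≤ 2 := by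
      apply max_le <;> nlinarith
    nlinarith
  · have hinner : (‖a (n - 1)‖) ^ 2 +
        4 * (t ^ 2 + max (‖a (n - 2)‖) (2.15 * t ^ 2)) ≤ 13.69 := by
      have hmax : max (‖a (n - 2)‖) (2.15 * t ^ 2) ≤ 2.15 := by
        apply max_le <;> nlinarith
      nlinarith
    have hsq : Real.sqrt ((‖a (n - 1)‖) ^ 2 +
        4 * (t ^ 2 + max (‖a (n - 2)‖) (2.15 * t ^ 2))) ≤ 3.7 := by
      rw [show (3.7:ℝ) = Real.sqrt (3.7^2) from (Real.sqrt_sq (by norm_num)).symm]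
      exact Real.sqrt_le_sqrt (by nlinarith)
    linarith
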